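/- For the dual numbers A = k[t]/(t²), the minimal model differential b on the free graded algebra on generators s⁻¹γ_r (r ≥ 0, with |s⁻¹γ_r| = r and γ_r the unique r-chain t^{r+1}) is given by b(s⁻¹γ_r) = Σ_{r₁+r₂=r−1, r₁,r₂≥0} (−1)^{r₁+1} s⁻¹γ_{r₁} ⊗ s⁻¹γ_{r₂}, and this derivation satisfies b² = 0. -/

import Mathlib

variable (k : Type*) [Field k]

/-- Push a word-level map forward along the basis of the free module on words.  Words in
the alphabet `ℕ` encode noncommutative monomials in the generators `s⁻¹γ_r` (`r ≥ 0`) of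
the minimal model of the dual numbers, `|s⁻¹γ_r| = r`. -/
noncomputable def mapWords (f : List ℕ → List ℕ) (x : List ℕ →₀ k) : List ℕ →₀ k :=
  x.sum fun u c => Finsupp.single (f u) c

/-- `b(s⁻¹γ_r) = Σ_{r₁+r₂=r−1} (−1)^{r₁+1} s⁻¹γ_{r₁} ⊗ s⁻¹γ_{r₂}`. -/
noncomputable def bgen (r : ℕ) : List ℕ →₀ k :=
  ∑ i ∈ Finset.range r, ((-1 : k) ^ (i + 1)) • Finsupp.single [i, r - 1 - i] (1 : k)

/-- The extension of `b` to words as a superderivation: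
`b(γ·w) = b(γ)·w + (−1)^{|γ|} γ·b(w)`. -/
noncomputable def bword : List ℕ → (List ℕ →₀ k)
  | [] => 0
  | r :: w =>
      mapWords k (· ++ w) (bgen k r) + ((-1 : k) ^ r) • mapWords k (r :: ·) (bword w)

/-- The differential `b` of the minimal model `Ω_∞ Tor_A(k,k)` of the dual numbers
`A = k[t]/(t²)`, on the free module on words in the generators `s⁻¹γ_r`. -/
noncomputable def bder (x : List ℕ →₀ k) : List ℕ →₀ k :=
  x.sum fun w c => c • bword k w

/-- For the dual numbers `A = k[t]/(t²)`, the minimal model differential `b` on the free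
graded algebra on the generators `s⁻¹γ_r` (`γ_r = t^{r+1}` the unique `r`-chain,
`|s⁻¹γ_r| = r`) is given by
`b(s⁻¹γ_r) = Σ_{r₁+r₂=r−1} (−1)^{r₁+1} s⁻¹γ_{r₁} ⊗ s⁻¹γ_{r₂}`, and this derivation
squares to zero. -/
lemma mapWords_def (f : List ℕ → List ℕ) (x : List ℕ →₀ k) :
    mapWords k f x = Finsupp.mapDomain f x := rfl
lemma bder_def (x : List ℕ →₀ k) :
    bder k x = Finsupp.linearCombination k (bword k) x :=
  (Finsupp.linearCombination_apply _ _).symm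
lemma bder_single (w : List ℕ) : bder k (Finsupp.single w (1 : k)) = bword k w := by
  rw [bder_def, Finsupp.linearCombination_single, one_smul]
lemma bword_singleton (r : ℕ) : bword k [r] = bgen k r := by
  show mapWords k (· ++ []) (bgen k r) + ((-1 : k) ^ r) • mapWords k (r :: ·) (bword k []) = _
  show _ + ((-1 : k) ^ r) • mapWords k (r :: ·) 0 = _
  simp only [mapWords_def, Finsupp.mapDomain_zero, smul_zero, add_zero, List.append_nil]
  exact Finsupp.mapDomain_id

lemma mapWords_bgen (f : List ℕ → List ℕ) (r : ℕ) :
    mapWords k f (bgen k r)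
      = ∑ i ∈ Finset.range r, ((-1 : k) ^ (i + 1)) • Finsupp.single (f [i, r - 1 - i]) (1 : k) := by
  rw [mapWords_def, bgen, Finsupp.mapDomain_finset_sum]
  exact Finset.sum_congr rfl fun i _ => by
    rw [Finsupp.mapDomain_smul, Finsupp.mapDomain_single]

lemma bword_pair (i j : ℕ) : bword k [i, j] =
    (∑ a ∈ Finset.range i, ((-1 : k) ^ (a + 1)) • Finsupp.single [a, i - 1 - a, j] (1 : k))
    + (-1 : k) ^ i •
      ∑ b ∈ Finset.range j, ((-1 : k) ^ (b + 1)) • Finsupp.single [i, b, j - 1 - b] (1 : k) := by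
  show mapWords k (· ++ [j]) (bgen k i) + ((-1 : k) ^ i) • mapWords k (i :: ·) (bword k [j]) = _
  rw [bword_singleton, mapWords_bgen, mapWords_bgen]
  simp

lemma tri {M : Type*} [AddCommMonoid M] (n : ℕ) (f : ℕ → ℕ → M) :
    ∑ j ∈ Finset.range n, ∑ a ∈ Finset.range (j + 1), f a (j - a)
      = ∑ x ∈ Finset.range n, ∑ y ∈ Finset.range (n - x), f x y := by
  induction n with
  | zero => simp
  | succ n ih =>
    rw [Finset.sum_range_succ, ih,
      Finset.sum_range_succ (f := fun x => ∑ y ∈ Finset.range (n + 1 - x), f x y)]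
    have h1 : ∀ x ∈ Finset.range n, ∑ y ∈ Finset.range (n + 1 - x), f x y
        = (∑ y ∈ Finset.range (n - x), f x y) + f x (n - x) := by
      intro x hx
      rw [Finset.mem_range] at hx
      rw [show n + 1 - x = (n - x) + 1 by omega, Finset.sum_range_succ]
    rw [Finset.sum_congr rfl h1, Finset.sum_add_distrib,
      Finset.sum_range_succ (f := fun a => f a (n - a))]
    simp [add_assoc]

lemma bder_bgen_expand (r : ℕ) :
    bder k (bgen k r) = ∑ i ∈ Finset.range r, ((-1 : k) ^ (i + 1)) • bword k [i, r - 1 - i] := by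
  rw [bder_def, bgen, map_sum (Finsupp.linearCombination k (bword k))]
  exact Finset.sum_congr rfl fun i _ => by
    rw [map_smul, Finsupp.linearCombination_single, one_smul]

lemma bder_bgen (r : ℕ) : bder k (bgen k r) = 0 := by
  rw [bder_bgen_expand]
  obtain _ | m := r
  · simp
  set F : ℕ → ℕ → (List ℕ →₀ k) :=
    fun x y => ((-1 : k) ^ (y + 1)) • Finsupp.single [x, y, m - x - 1 - y] (1 : k) with hF
  have expand : ∀ i ∈ Finset.range (m + 1),
      ((-1 : k) ^ (i + 1)) • bword k [i, m + 1 - 1 - i]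
        = (∑ a ∈ Finset.range i,
            (((-1 : k) ^ (i + 1)) * ((-1 : k) ^ (a + 1))) • Finsupp.single [a, i - 1 - a, m - i] (1 : k))
          + ∑ b ∈ Finset.range (m - i), -(F i b) := by
    intro i hi
    rw [Finset.mem_range] at hi
    have hs : ((-1 : k) ^ (i + 1) * (-1 : k) ^ i) = -1 := by
      rw [← pow_add, show i + 1 + i = 2 * i + 1 by omega]
      exact Odd.neg_one_pow ⟨i, by omega⟩
    rw [show m + 1 - 1 - i = m - i by omega, bword_pair, smul_add, smul_smul, hs,
      Finset.smul_sum, Finset.smul_sum]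
    congr 1
    · exact Finset.sum_congr rfl fun a _ => smul_smul _ _ _
    · exact Finset.sum_congr rfl fun b _ => by rw [smul_smul, hF, neg_one_mul, neg_smul]
  rw [Finset.sum_congr rfl expand, Finset.sum_add_distrib]
  -- second double sum: drop the empty i = m term
  rw [Finset.sum_range_succ (f := fun i => ∑ b ∈ Finset.range (m - i), -(F i b))]
  simp only [Nat.sub_self, Finset.range_zero, Finset.sum_empty, add_zero]
  -- first double sum: peel off the empty i = 0 term and reindex over the triangle
  rw [Finset.sum_range_succ' (f := fun i => ∑ a ∈ Finset.range i,
    (((-1 : k) ^ (i + 1)) * ((-1 : k) ^ (a + 1))) • Finsupp.single [a, i - 1 - a, m - i] (1 : k))]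
  simp only [Finset.range_zero, Finset.sum_empty, add_zero]
  have hshape : ∀ j ∈ Finset.range m, ∑ a ∈ Finset.range (j + 1),
      (((-1 : k) ^ (j + 1 + 1)) * ((-1 : k) ^ (a + 1))) •
        Finsupp.single [a, j + 1 - 1 - a, m - (j + 1)] (1 : k)
      = ∑ a ∈ Finset.range (j + 1), F a (j - a) := by
    intro j _
    refine Finset.sum_congr rfl fun a ha => ?_
    rw [Finset.mem_range] at ha
    obtain ⟨c, rfl⟩ : ∃ c, j = a + c := ⟨j - a, by omega⟩
    rw [hF, Nat.add_sub_cancel_left, show a + c + 1 - 1 - a = c by omega,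
      show m - (a + c + 1) = m - a - 1 - c by omega]
    congr 1
    rw [← pow_add, show a + c + 1 + 1 + (a + 1) = (c + 1) + 2 * (a + 1) by omega, pow_add,
      pow_mul, neg_one_sq, one_pow, mul_one]
  rw [Finset.sum_congr rfl hshape, tri]
  rw [← Finset.sum_add_distrib]
  refine Finset.sum_eq_zero fun x _ => ?_
  rw [← Finset.sum_add_distrib]
  exact Finset.sum_eq_zero fun y _ => add_neg_cancel _

lemma bder_add (x y : List ℕ →₀ k) : bder k (x + y) = bder k x + bder k y := by
  rw [bder_def, bder_def, bder_def, map_add]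

lemma bder_smul (c : k) (x : List ℕ →₀ k) : bder k (c • x) = c • bder k x := by
  rw [bder_def, bder_def, map_smul]

lemma fsum_def (y : List ℕ →₀ k) (g : List ℕ → k → (List ℕ →₀ k)) :
    y.sum g = ∑ v ∈ y.support, g v (y v) := rfl

lemma bword_append (u v : List ℕ) :
    bword k (u ++ v) = mapWords k (· ++ v) (bword k u)
      + ((-1 : k) ^ u.sum) • mapWords k (u ++ ·) (bword k v) := by
  induction u with
  | nil =>
    simp only [List.nil_append, List.sum_nil, pow_zero, one_smul, mapWords_def]
    show bword k v = Finsupp.mapDomain _ 0 + _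
    rw [Finsupp.mapDomain_zero, zero_add]
    exact Finsupp.mapDomain_id.symm
  | cons r u ih =>
    show mapWords k (· ++ (u ++ v)) (bgen k r)
        + ((-1 : k) ^ r) • mapWords k (r :: ·) (bword k (u ++ v)) = _
    rw [ih]
    show _ = mapWords k (· ++ v) (mapWords k (· ++ u) (bgen k r)
        + ((-1 : k) ^ r) • mapWords k (r :: ·) (bword k u)) + _
    simp only [mapWords_def, Finsupp.mapDomain_add, Finsupp.mapDomain_smul, smul_add,
      smul_smul, ← Finsupp.mapDomain_comp, Function.comp_def, List.append_assoc,
      List.cons_append, List.sum_cons, pow_add, add_assoc]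

lemma bder_mapWords (f : List ℕ → List ℕ) (x : List ℕ →₀ k) :
    bder k (mapWords k f x) = x.sum fun u c => c • bword k (f u) := by
  rw [mapWords_def, bder_def, Finsupp.linearCombination_mapDomain,
    Finsupp.linearCombination_apply]
  rfl

lemma sum_smul_mapDomain_bword (f : List ℕ → List ℕ) (y : List ℕ →₀ k) :
    (y.sum fun v c => c • Finsupp.mapDomain f (bword k v))
      = Finsupp.mapDomain f (bder k y) := by
  rw [show bder k y = y.sum fun v c => c • bword k v from rfl, Finsupp.mapDomain_sum]
  exact Finsupp.sum_congr fun v _ => (Finsupp.mapDomain_smul _ _).symm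

lemma bder_bword (w : List ℕ) : bder k (bword k w) = 0 := by
  induction w with
  | nil =>
    show bder k 0 = 0
    rw [bder_def, map_zero]
  | cons r w ih =>
    set y := bword k w with hy
    show bder k (mapWords k (· ++ w) (bgen k r) + ((-1 : k) ^ r) • mapWords k (r :: ·) y) = 0
    rw [bder_add, bder_smul]
    -- the second summand
    have hB : bder k (mapWords k (r :: ·) y)
        = (y.sum fun v c => c • Finsupp.mapDomain (· ++ v) (bgen k r))
          + ((-1 : k) ^ r) • Finsupp.mapDomain (r :: ·) (bder k y) := by
      rw [bder_mapWords]
      have hpt : ∀ v (c : k), c • bword k (r :: v)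
          = c • Finsupp.mapDomain (· ++ v) (bgen k r)
            + ((-1 : k) ^ r) • (c • Finsupp.mapDomain (r :: ·) (bword k v)) := by
        intro v c
        show c • (mapWords k (· ++ v) (bgen k r)
            + ((-1 : k) ^ r) • mapWords k (r :: ·) (bword k v)) = _
        rw [mapWords_def, mapWords_def, smul_add, smul_comm]
      rw [Finsupp.sum_congr (g2 := fun v c => c • Finsupp.mapDomain (· ++ v) (bgen k r)
          + ((-1 : k) ^ r) • (c • Finsupp.mapDomain (r :: ·) (bword k v)))
          fun v _ => hpt v (y v),
        Finsupp.sum_add, ← Finsupp.smul_sum, sum_smul_mapDomain_bword]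
    rw [hB, ih, Finsupp.mapDomain_zero, smul_zero, add_zero]
    -- the first summand
    have hA : bder k (mapWords k (· ++ w) (bgen k r))
        = ∑ i ∈ Finset.range r, ((-1 : k) ^ (i + 1)) • bword k ([i, r - 1 - i] ++ w) := by
      rw [mapWords_bgen, bder_def, map_sum (Finsupp.linearCombination k (bword k))]
      exact Finset.sum_congr rfl fun i _ => by
        rw [map_smul, Finsupp.linearCombination_single, one_smul]
    have hA2 : ∀ i ∈ Finset.range r, ((-1 : k) ^ (i + 1)) • bword k ([i, r - 1 - i] ++ w)
        = ((-1 : k) ^ (i + 1)) • Finsupp.mapDomain (· ++ w) (bword k [i, r - 1 - i])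
          + (((-1 : k) ^ (i + 1)) * ((-1 : k) ^ (r - 1))) •
              Finsupp.mapDomain ([i, r - 1 - i] ++ ·) y := by
      intro i hi
      rw [Finset.mem_range] at hi
      rw [bword_append, mapWords_def, mapWords_def, smul_add, smul_smul, ← hy,
        show ([i, r - 1 - i] : List ℕ).sum = r - 1 by
          simp only [List.sum_cons, List.sum_nil]; omega]
    rw [hA, Finset.sum_congr rfl hA2, Finset.sum_add_distrib]
    -- the first of these sums is mapDomain (· ++ w) applied to bder (bgen r) = 0
    have h0 : ∑ i ∈ Finset.range r,
        ((-1 : k) ^ (i + 1)) • Finsupp.mapDomain (· ++ w) (bword k [i, r - 1 - i]) = 0 := by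
      have := Finset.sum_congr rfl fun i (_ : i ∈ Finset.range r) =>
        (Finsupp.mapDomain_smul (f := (· ++ w)) ((-1 : k) ^ (i + 1))
          (bword k [i, r - 1 - i])).symm
      rw [this, ← Finsupp.mapDomain_finset_sum, ← bder_bgen_expand, bder_bgen,
        Finsupp.mapDomain_zero]
    rw [h0, zero_add]
    -- now the two remaining cross terms cancel
    have hX : ∀ i ∈ Finset.range r,
        (((-1 : k) ^ (i + 1)) * ((-1 : k) ^ (r - 1))) •
            Finsupp.mapDomain ([i, r - 1 - i] ++ ·) y
          = ∑ v ∈ y.support,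
              ((((-1 : k) ^ (i + 1)) * ((-1 : k) ^ (r - 1))) * y v) •
                Finsupp.single ([i, r - 1 - i] ++ v) (1 : k) := by
      intro i _
      rw [show Finsupp.mapDomain ([i, r - 1 - i] ++ ·) y
          = ∑ v ∈ y.support, Finsupp.single ([i, r - 1 - i] ++ v) (y v) from rfl,
        Finset.smul_sum]
      exact Finset.sum_congr rfl fun v _ => by
        rw [← Finsupp.smul_single_one, smul_smul]
    have hT : ((-1 : k) ^ r) • (y.sum fun v c => c • Finsupp.mapDomain (· ++ v) (bgen k r))
        = ∑ i ∈ Finset.range r, ∑ v ∈ y.support,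
            (((-1 : k) ^ r) * (y v * ((-1 : k) ^ (i + 1)))) •
              Finsupp.single ([i, r - 1 - i] ++ v) (1 : k) := by
      rw [fsum_def]
      have hpt2 : ∀ v ∈ y.support, (y v) • Finsupp.mapDomain (· ++ v) (bgen k r)
          = ∑ i ∈ Finset.range r,
              (y v * ((-1 : k) ^ (i + 1))) • Finsupp.single ([i, r - 1 - i] ++ v) (1 : k) := by
        intro v _
        rw [← mapWords_def, mapWords_bgen, Finset.smul_sum]
        exact Finset.sum_congr rfl fun i _ => by rw [smul_smul]
      rw [Finset.sum_congr rfl hpt2, Finset.smul_sum, Finset.sum_comm]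
      exact Finset.sum_congr rfl fun i _ => by
        rw [Finset.smul_sum]
        exact Finset.sum_congr rfl fun v _ => by rw [smul_smul]
    rw [Finset.sum_congr rfl hX, hT, ← Finset.sum_add_distrib]
    refine Finset.sum_eq_zero fun i hi => ?_
    rw [Finset.mem_range] at hi
    obtain ⟨m, rfl⟩ : ∃ m, r = m + 1 := ⟨r - 1, by omega⟩
    rw [← Finset.sum_add_distrib]
    refine Finset.sum_eq_zero fun v _ => ?_
    rw [← add_smul, show (((-1 : k) ^ (i + 1)) * ((-1 : k) ^ (m + 1 - 1))) * y v
        + ((-1 : k) ^ (m + 1)) * (y v * ((-1 : k) ^ (i + 1))) = 0 by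
      simp only [Nat.add_sub_cancel, pow_succ]; ring, zero_smul]

theorem stmt13 :
    (∀ r : ℕ, bder k (Finsupp.single [r] (1 : k)) =
      ∑ i ∈ Finset.range r,
        ((-1 : k) ^ (i + 1)) • Finsupp.single [i, r - 1 - i] (1 : k)) ∧
    (∀ x : List ℕ →₀ k, bder k (bder k x) = 0) := by
  constructor
  · intro r
    rw [bder_single, bword_singleton, bgen]
  · intro x
    rw [show bder k x = x.sum fun w c => c • bword k w from rfl, bder_def,
      map_finsuppSum]
    rw [Finsupp.sum_congr (g2 := fun _ _ => (0 : List ℕ →₀ k)) fun w _ => by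
      rw [map_smul, ← bder_def, bder_bword, smul_zero]]
    exact Finset.sum_const_zero
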